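/- Fix ħ > 0 and define Ω : ℂ × ℂ → ℂ by Ω(z,w) = exp(−(|z|² + |w|² − 2·z·conj(w))/(2ħ)). Then Ω satisfies the propagator conditions for ℂ with the measure (1/(πħ))·dA, where dA is Lebesgue measure on ℂ ≅ ℝ²: (1) Ω(z,z) = 1 for all z; (2) |Ω(z,w)| = exp(−|z−w|²/(2ħ)) < 1 whenever z ≠ w; (3) Ω(z,w) = conj(Ω(w,z)); (4) for all z, w the function u ↦ Ω(z,u)Ω(u,w) is integrable and (1/(πħ)) ∫_ℂ Ω(z,u)Ω(u,w) dA(u) = Ω(z,w); (5) sup_z (1/(πħ)) ∫_ℂ |Ω(z,u)| dA(u) = 2 < ∞. -/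

import Mathlib

open MeasureTheory
section GaussAux
open Complex Real

lemma normc_sq (u : ℂ) : (‖u‖ : ℂ)^2 = (u.re : ℂ)^2 + (u.im : ℂ)^2 := by
  have : (‖u‖:ℝ)^2 = u.re^2 + u.im^2 := by
    rw [Complex.sq_norm, Complex.normSq_apply]; ring
  norm_cast

lemma gauss_integrable (b : ℝ) (hb : 0 < b) (a c : ℂ) :
    Integrable (fun u : ℂ =>
      Complex.exp (-(b:ℂ) * (‖u‖:ℂ)^2 + a * u + c * (starRingEnd ℂ) u)) volume := by
  have hemb := Complex.measurableEquivPi.symm.measurableEmbedding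
  rw [← (Complex.volume_preserving_equiv_pi.symm).integrable_comp_emb hemb]
  have h := GaussianFourier.integrable_cexp_neg_sum_mul_add
    (b := fun _ : Fin 2 => (b:ℂ)) (fun _ => by simpa using hb) ![a + c, Complex.I * (a - c)]
  convert h using 2 with v
  case e'_5 => rfl
  simp only [Function.comp_apply, Complex.measurableEquivPi_symm_apply,
    Fin.sum_univ_two, Matrix.cons_val_zero, Matrix.cons_val_one, Matrix.head_cons]
  rw [normc_sq]
  simp [Complex.conj_ofReal]
  ring

lemma gauss_integral (b : ℝ) (hb : 0 < b) (a c : ℂ) :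
    ∫ u : ℂ, Complex.exp (-(b:ℂ) * (‖u‖:ℂ)^2 + a * u + c * (starRingEnd ℂ) u) =
      ((Real.pi / b : ℝ) : ℂ) * Complex.exp (a * c / b) := by
  have hemb := Complex.measurableEquivPi.symm.measurableEmbedding
  rw [← (Complex.volume_preserving_equiv_pi.symm).integral_comp hemb]
  have h := GaussianFourier.integral_cexp_neg_sum_mul_add
    (b := fun _ : Fin 2 => (b:ℂ)) (fun _ => by simpa using hb) ![a + c, Complex.I * (a - c)]
  rw [show (fun v : Fin 2 → ℝ => Complex.exp (-(b:ℂ) * (‖Complex.measurableEquivPi.symm v‖:ℂ)^2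
      + a * Complex.measurableEquivPi.symm v + c * (starRingEnd ℂ) (Complex.measurableEquivPi.symm v)))
      = (fun v : Fin 2 → ℝ => Complex.exp (- ∑ i, (fun _ : Fin 2 => (b:ℂ)) i * (v i : ℂ) ^ 2
        + ∑ i, (![a + c, Complex.I * (a - c)]) i * v i)) from ?_, h]
  · rw [Fin.prod_univ_two]
    simp only [Matrix.cons_val_zero, Matrix.cons_val_one, Matrix.head_cons]
    have hπb : ((Real.pi : ℂ) / (b:ℂ)) ≠ 0 := by
      apply div_ne_zero <;> norm_cast <;> positivity
    rw [show ((Real.pi:ℂ) / b) ^ (1/2 : ℂ) * Complex.exp ((a + c) ^ 2 / (4 * b)) *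
        (((Real.pi:ℂ) / b) ^ (1/2 : ℂ) * Complex.exp ((Complex.I * (a - c)) ^ 2 / (4 * b)))
        = (((Real.pi:ℂ) / b) ^ (1/2 : ℂ) * ((Real.pi:ℂ) / b) ^ (1/2 : ℂ)) *
          (Complex.exp ((a + c) ^ 2 / (4 * b)) * Complex.exp ((Complex.I * (a - c)) ^ 2 / (4 * b)))
        from by ring]
    rw [← Complex.cpow_add _ _ hπb, ← Complex.exp_add]
    norm_num
    left
    have hb' : (b:ℂ) ≠ 0 := by norm_cast; positivity
    congr 1
    field_simp
    ring_nf
    rw [Complex.I_sq]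
    ring
  · funext v
    simp only [Function.comp_apply, Complex.measurableEquivPi_symm_apply,
      Fin.sum_univ_two, Matrix.cons_val_zero, Matrix.cons_val_one, Matrix.head_cons]
    congr 1
    rw [normc_sq]
    simp [Complex.conj_ofReal]
    ring

end GaussAux

/-- The coherent-state propagator of the flat plane `ℂ` at Planck constant `hbar`:
`Ω(z,w) = exp(−(|z|² + |w|² − 2·z·conj w)/(2·hbar))`. -/
noncomputable def flatPropagator (hbar : ℝ) (z w : ℂ) : ℂ :=
  Complex.exp (-(((‖z‖ : ℂ) ^ 2 + (‖w‖ : ℂ) ^ 2 - 2 * z * (starRingEnd ℂ) w) /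
    (2 * hbar)))

/-- The reference measure `(1/(π·hbar))·dA` on `ℂ`, `dA` being Lebesgue measure. -/
noncomputable def flatMeasure (hbar : ℝ) : Measure ℂ :=
  ENNReal.ofReal (1 / (Real.pi * hbar)) • (volume : Measure ℂ)

/-- For `hbar > 0`, the Gaussian kernel `flatPropagator hbar`
satisfies the propagator conditions on `ℂ` with respect to `(1/(π·hbar))·dA`:
(1) `Ω(z,z) = 1`; (2) `|Ω(z,w)| = exp(−|z−w|²/(2·hbar)) < 1` for `z ≠ w`;
(3) `Ω(z,w) = conj(Ω(w,z))`; (4) the reproducing identity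
`(1/(π·hbar)) ∫ Ω(z,u)Ω(u,w) dA(u) = Ω(z,w)` (with integrable integrand);
(5) `(1/(π·hbar)) ∫ |Ω(z,u)| dA(u) = 2` for every `z`, so the sup over `z` is
`2 < ∞`. -/
theorem flatPropagator_is_propagator (hbar : ℝ) (hpos : 0 < hbar) :
    (∀ z : ℂ, flatPropagator hbar z z = 1) ∧
    (∀ z w : ℂ, ‖flatPropagator hbar z w‖ = Real.exp (-(‖z - w‖ ^ 2) / (2 * hbar))) ∧
    (∀ z w : ℂ, z ≠ w → ‖flatPropagator hbar z w‖ < 1) ∧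
    (∀ z w : ℂ, flatPropagator hbar z w = (starRingEnd ℂ) (flatPropagator hbar w z)) ∧
    (∀ z w : ℂ,
      Integrable (fun u => flatPropagator hbar z u * flatPropagator hbar u w)
        (flatMeasure hbar) ∧
      ∫ u, flatPropagator hbar z u * flatPropagator hbar u w ∂(flatMeasure hbar) =
        flatPropagator hbar z w) ∧
    (∀ z : ℂ, Integrable (fun u => ‖flatPropagator hbar z u‖) (flatMeasure hbar) ∧
      ∫ u, ‖flatPropagator hbar z u‖ ∂(flatMeasure hbar) = 2) := by
  have hbne : (hbar : ℂ) ≠ 0 := by norm_cast; positivity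
  have hπ : (0:ℝ) < Real.pi := Real.pi_pos
  have hmulconj : ∀ z : ℂ, z * (starRingEnd ℂ) z = (‖z‖:ℂ)^2 := by
    intro z
    rw [Complex.mul_conj]
    norm_cast
    rw [Complex.sq_norm]
  have hfin : (ENNReal.ofReal (1 / (Real.pi * hbar))) ≠ ⊤ := ENNReal.ofReal_ne_top
  have htoReal : (ENNReal.ofReal (1 / (Real.pi * hbar))).toReal = 1 / (Real.pi * hbar) :=
    ENNReal.toReal_ofReal (by positivity)
  -- (2)
  have h2 : ∀ z w : ℂ, ‖flatPropagator hbar z w‖ =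
      Real.exp (-(‖z - w‖ ^ 2) / (2 * hbar)) := by
    intro z w
    rw [flatPropagator, Complex.norm_exp]
    congr 1
    have hre : (-(((‖z‖ : ℂ) ^ 2 + (‖w‖ : ℂ) ^ 2 - 2 * z * (starRingEnd ℂ) w) /
        (2 * (hbar:ℂ)))).re
        = -((‖z‖^2 + ‖w‖^2 - 2 * (z * (starRingEnd ℂ) w).re) / (2 * hbar)) := by
      rw [show (2 * (hbar:ℂ)) = ((2*hbar : ℝ) : ℂ) from by push_cast; ring,
        Complex.neg_re, Complex.div_ofReal_re]
      congr 2
      simp [Complex.sub_re, Complex.add_re, ← Complex.ofReal_pow]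
      ring
    rw [hre]
    congr 1
    have : ‖z - w‖^2 = ‖z‖^2 + ‖w‖^2 - 2 * (z * (starRingEnd ℂ) w).re := by
      rw [Complex.sq_norm, Complex.sq_norm, Complex.sq_norm, Complex.normSq_sub,
        Complex.normSq_eq_norm_sq, Complex.normSq_eq_norm_sq]
    rw [this]; ring
  -- pointwise factorization of Ω z · as constant times Gaussian (a = 0)
  have hfac1 : ∀ z : ℂ, (fun u : ℂ => flatPropagator hbar z u) =
      (fun u : ℂ => Complex.exp (-(((‖z‖:ℂ)^2) / (2 * hbar))) *
        Complex.exp (-((1/(2*hbar) : ℝ):ℂ) * (‖u‖:ℂ)^2 + 0 * u +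
          (z / hbar) * (starRingEnd ℂ) u)) := by
    intro z
    funext u
    rw [flatPropagator, ← Complex.exp_add]
    congr 1
    push_cast
    field_simp
    ring
  -- pointwise factorization of the product
  have hfac2 : ∀ z w : ℂ, (fun u : ℂ => flatPropagator hbar z u * flatPropagator hbar u w) =
      (fun u : ℂ => Complex.exp (-((((‖z‖:ℂ)^2 + (‖w‖:ℂ)^2)) / (2 * hbar))) *
        Complex.exp (-((1/hbar : ℝ):ℂ) * (‖u‖:ℂ)^2 + ((starRingEnd ℂ) w / hbar) * u +
          (z / hbar) * (starRingEnd ℂ) u)) := by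
    intro z w
    funext u
    rw [flatPropagator, flatPropagator, ← Complex.exp_add, ← Complex.exp_add]
    congr 1
    push_cast
    field_simp
    ring
  refine ⟨?_, h2, ?_, ?_, ?_, ?_⟩
  · -- (1)
    intro z
    rw [flatPropagator,
      show (‖z‖:ℂ)^2 + (‖z‖:ℂ)^2 - 2 * z * (starRingEnd ℂ) z = 0 from by
        rw [mul_assoc, hmulconj]; ring,
      zero_div, neg_zero, Complex.exp_zero]
  · -- (2b)
    intro z w hzw
    rw [h2 z w, Real.exp_lt_one_iff]
    have h1 : 0 < ‖z - w‖ := norm_pos_iff.mpr (sub_ne_zero.mpr hzw)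
    have : 0 < ‖z - w‖^2 := by positivity
    apply div_neg_of_neg_of_pos <;> [linarith; linarith]
  · -- (3)
    intro z w
    rw [flatPropagator, flatPropagator, ← Complex.exp_conj]
    congr 1
    simp only [map_neg, map_div₀, map_sub, map_add, map_mul, map_pow, map_ofNat,
      Complex.conj_ofReal, Complex.conj_conj]
    ring
  · -- (4)
    intro z w
    set K := Complex.exp (-((((‖z‖:ℂ)^2 + (‖w‖:ℂ)^2)) / (2 * hbar))) with hK
    have hb' : (0:ℝ) < 1/hbar := by positivity
    have hint : Integrable (fun u : ℂ => flatPropagator hbar z u * flatPropagator hbar u w)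
        volume := by
      rw [hfac2 z w]
      exact (gauss_integrable (1/hbar) hb' ((starRingEnd ℂ) w / hbar) (z / hbar)).const_mul K
    refine ⟨hint.smul_measure hfin, ?_⟩
    rw [flatMeasure, integral_smul_measure, htoReal, hfac2 z w, integral_const_mul,
      gauss_integral (1/hbar) hb' ((starRingEnd ℂ) w / hbar) (z / hbar)]
    have hΩ : flatPropagator hbar z w = K * Complex.exp (z * (starRingEnd ℂ) w / hbar) := by
      rw [flatPropagator, hK, ← Complex.exp_add]
      congr 1
      field_simp
      ring
    rw [hΩ, Complex.real_smul]
    have e1 : ((Real.pi / (1/hbar) : ℝ) : ℂ) = (Real.pi : ℂ) * hbar := by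
      push_cast
      field_simp
    have e2 : (starRingEnd ℂ) w / (hbar:ℂ) * (z / hbar) / ((1/hbar : ℝ):ℂ) =
        z * (starRingEnd ℂ) w / hbar := by
      push_cast
      field_simp
    rw [e1, e2]
    have hπne : (Real.pi : ℂ) ≠ 0 := by norm_cast; positivity
    have hs : ((1 / (Real.pi * hbar) : ℝ) : ℂ) * ((Real.pi:ℂ) * hbar) = 1 := by
      push_cast
      field_simp
    linear_combination (K * Complex.exp (z * (starRingEnd ℂ) w / (hbar:ℂ))) * hs
  · -- (5)
    intro z
    have hb2 : (0:ℝ) < 1/(2*hbar) := by positivity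
    have hint : Integrable (fun u : ℂ => flatPropagator hbar z u) volume := by
      rw [hfac1 z]
      exact (gauss_integrable (1/(2*hbar)) hb2 0 (z / hbar)).const_mul _
    refine ⟨(hint.norm).smul_measure hfin, ?_⟩
    rw [flatMeasure, integral_smul_measure, htoReal]
    have hrw : (fun u : ℂ => ‖flatPropagator hbar z u‖) =
        (fun u : ℂ => Real.exp (-(1/(2*hbar)) * ‖z - u‖^2)) := by
      funext u
      rw [h2 z u]
      congr 1
      field_simp
    rw [hrw]
    rw [MeasureTheory.integral_sub_left_eq_self
      (fun v : ℂ => Real.exp (-(1/(2*hbar)) * ‖v‖^2)) volume z]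
    rw [GaussianFourier.integral_rexp_neg_mul_sq_norm hb2]
    rw [Complex.finrank_real_complex]
    norm_num
    field_simp
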